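/- arXiv:1401.0612 — 5 statements merged into one kernel-verified Lean document; each statement's English description precedes it below -/
import Mathlib

section
/- Let U ⊆ ℝ² be open and let z : ℝ² → ℝ be twice continuously differentiable on U. Fix (x,y) ∈ U and p ∈ ℝ with D(x,y,p) := z_y(x,y) + z_x(x,y)·p − p² ≠ 0, and suppose D(·,·,q) ≠ 0 for all (x',y',q) in a neighborhood of (x,y,p). Define F(x,y,p) = 1/D(x,y,p) and G(x,y,p) = (p − z_x(x,y))/D(x,y,p) on that neighborhood. Then, at the point (x,y,p), one has the identity (∂F/∂y + G·∂F/∂p − ∂G/∂x − F·∂G/∂p) · D² = −(z_yy + z_x·z_xy − z_y·z_xx + 1), where all partial derivatives of F and G are taken as functions of the three independent variables (x,y,p) and the derivatives of z are evaluated at (x,y). -/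
/-- Partial derivative in `x` of a function on `ℝ × ℝ`. -/
noncomputable def pdx (f : ℝ × ℝ → ℝ) (q : ℝ × ℝ) : ℝ := fderiv ℝ f q (1, 0)

/-- Partial derivative in `y` of a function on `ℝ × ℝ`. -/
noncomputable def pdy (f : ℝ × ℝ → ℝ) (q : ℝ × ℝ) : ℝ := fderiv ℝ f q (0, 1)

/-- Partial derivative in the first variable `x` of a function on `ℝ × ℝ × ℝ = {(x,y,p)}`. -/
noncomputable def pd1 (f : ℝ × ℝ × ℝ → ℝ) (q : ℝ × ℝ × ℝ) : ℝ := fderiv ℝ f q (1, 0, 0)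

/-- Partial derivative in the second variable `y`. -/
noncomputable def pd2 (f : ℝ × ℝ × ℝ → ℝ) (q : ℝ × ℝ × ℝ) : ℝ := fderiv ℝ f q (0, 1, 0)

/-- Partial derivative in the third variable `p`. -/
noncomputable def pd3 (f : ℝ × ℝ × ℝ → ℝ) (q : ℝ × ℝ × ℝ) : ℝ := fderiv ℝ f q (0, 0, 1)

/-- `D(x,y,p) = z_y(x,y) + z_x(x,y)·p − p²`. -/
noncomputable def Dfun (z : ℝ × ℝ → ℝ) (q : ℝ × ℝ × ℝ) : ℝ :=
  pdy z (q.1, q.2.1) + pdx z (q.1, q.2.1) * q.2.2 - q.2.2 ^ 2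

/-- `F(x,y,p) = 1/D(x,y,p)`. -/
noncomputable def Ffun (z : ℝ × ℝ → ℝ) (q : ℝ × ℝ × ℝ) : ℝ := 1 / Dfun z q

/-- `G(x,y,p) = (p − z_x(x,y))/D(x,y,p)`. -/
noncomputable def Gfun (z : ℝ × ℝ → ℝ) (q : ℝ × ℝ × ℝ) : ℝ :=
  (q.2.2 - pdx z (q.1, q.2.1)) / Dfun z q

/-- The Gibbons–Tsarev expression `z_yy + z_x·z_xy − z_y·z_xx + 1`. -/
noncomputable def GT (z : ℝ × ℝ → ℝ) (q : ℝ × ℝ) : ℝ :=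
  pdy (pdy z) q + pdx z q * pdx (pdy z) q - pdy z q * pdx (pdx z) q + 1

/-- The compatibility (zero-curvature) expression
`E = ∂F/∂y + G·∂F/∂p − ∂G/∂x − F·∂G/∂p` of system (1). -/
noncomputable def Efun (z : ℝ × ℝ → ℝ) (q : ℝ × ℝ × ℝ) : ℝ :=
  pd2 (Ffun z) q + Gfun z q * pd3 (Ffun z) q - pd1 (Gfun z) q - Ffun z q * pd3 (Gfun z) q

set_option maxHeartbeats 1000000 in
/-- At a point where `D ≠ 0` (and `D ≠ 0` in a whole neighborhood),
the compatibility expression of system (1) multiplied by `D²` equals minus the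
Gibbons–Tsarev expression. -/
theorem statement0 (U : Set (ℝ × ℝ)) (hU : IsOpen U) (z : ℝ × ℝ → ℝ)
    (hz : ContDiffOn ℝ 2 z U) (x y p : ℝ) (hmem : (x, y) ∈ U)
    (hD : Dfun z (x, y, p) ≠ 0)
    (hDnbhd : ∀ᶠ q in nhds ((x, y, p) : ℝ × ℝ × ℝ), Dfun z q ≠ 0) :
    Efun z (x, y, p) * (Dfun z (x, y, p)) ^ 2 = -GT z (x, y) := by
  have hz2 : ContDiffAt ℝ 2 z (x, y) := hz.contDiffAt (hU.mem_nhds hmem)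
  have hφ : DifferentiableAt ℝ (fderiv ℝ z) (x, y) :=
    (hz2.fderiv_right (m := 1) (by norm_num)).differentiableAt one_ne_zero
  set H := fderiv ℝ (fderiv ℝ z) (x, y) with hH
  have hsymm : H ((1:ℝ), (0:ℝ)) ((0:ℝ), (1:ℝ)) = H ((0:ℝ), (1:ℝ)) ((1:ℝ), (0:ℝ)) :=
    hz2.isSymmSndFDerivAt (by simp) _ _
  set A1 := ContinuousLinearMap.apply ℝ ℝ (((1:ℝ), (0:ℝ)) : ℝ × ℝ) with hA1
  set A2 := ContinuousLinearMap.apply ℝ ℝ (((0:ℝ), (1:ℝ)) : ℝ × ℝ) with hA2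
  have hzx : HasFDerivAt (pdx z) (A1.comp H) (x, y) :=
    A1.hasFDerivAt.comp (x, y) hφ.hasFDerivAt
  have hzy : HasFDerivAt (pdy z) (A2.comp H) (x, y) :=
    A2.hasFDerivAt.comp (x, y) hφ.hasFDerivAt
  set π : (ℝ × ℝ × ℝ) →L[ℝ] ℝ × ℝ :=
    (ContinuousLinearMap.fst ℝ ℝ (ℝ × ℝ)).prod
      ((ContinuousLinearMap.fst ℝ ℝ ℝ).comp (ContinuousLinearMap.snd ℝ ℝ (ℝ × ℝ))) with hπ
  set P3 : (ℝ × ℝ × ℝ) →L[ℝ] ℝ :=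
    (ContinuousLinearMap.snd ℝ ℝ ℝ).comp (ContinuousLinearMap.snd ℝ ℝ (ℝ × ℝ)) with hP3
  have hπd : HasFDerivAt (fun q : ℝ × ℝ × ℝ => ((q.1, q.2.1) : ℝ × ℝ)) π (x, y, p) :=
    π.hasFDerivAt
  have hp3 : HasFDerivAt (fun q : ℝ × ℝ × ℝ => q.2.2) P3 (x, y, p) := P3.hasFDerivAt
  set Lx := (A1.comp H).comp π with hLx
  set Ly := (A2.comp H).comp π with hLy
  have hzxπ : HasFDerivAt (fun q : ℝ × ℝ × ℝ => pdx z (q.1, q.2.1)) Lx (x, y, p) :=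
    by have := hzx.comp (x, y, p) hπd; exact this
  have hzyπ : HasFDerivAt (fun q : ℝ × ℝ × ℝ => pdy z (q.1, q.2.1)) Ly (x, y, p) :=
    by have := hzy.comp (x, y, p) hπd; exact this
  set D' := Ly + (pdx z (x, y) • P3 + p • Lx) - (p • P3 + p • P3) with hD'
  have hDfunc : Dfun z = fun q : ℝ × ℝ × ℝ =>
      pdy z (q.1, q.2.1) + pdx z (q.1, q.2.1) * q.2.2 - q.2.2 * q.2.2 := by
    funext q; simp [Dfun, pow_two]
  have hDf : HasFDerivAt (Dfun z) D' (x, y, p) := by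
    rw [hDfunc, hD']
    exact (hzyπ.add (hzxπ.mul hp3)).sub (hp3.mul hp3)
  set Dv := Dfun z (x, y, p) with hDvdef
  set FD' := (-(ContinuousLinearMap.mulLeftRight ℝ ℝ Dv⁻¹ Dv⁻¹)).comp D' with hFD'
  have hInv : HasFDerivAt (fun q : ℝ × ℝ × ℝ => (Dfun z q)⁻¹) FD' (x, y, p) :=
    (hasFDerivAt_inv' hD).comp (x, y, p) hDf
  have hFeq : Ffun z = fun q : ℝ × ℝ × ℝ => (Dfun z q)⁻¹ := by
    funext q; simp [Ffun, one_div]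
  have hF : HasFDerivAt (Ffun z) FD' (x, y, p) := by rw [hFeq]; exact hInv
  have hGeq : Gfun z = fun q : ℝ × ℝ × ℝ =>
      (q.2.2 - pdx z (q.1, q.2.1)) * (Dfun z q)⁻¹ := by
    funext q; simp [Gfun, div_eq_mul_inv]
  set G' := (p - pdx z (x, y)) • FD' + Dv⁻¹ • (P3 - Lx) with hG'
  have hG : HasFDerivAt (Gfun z) G' (x, y, p) := by
    rw [hGeq, hG']
    exact (hp3.sub hzxπ).mul hInv
  -- evaluate all partial derivatives
  have eF : fderiv ℝ (Ffun z) (x, y, p) = FD' := hF.fderiv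
  have eG : fderiv ℝ (Gfun z) (x, y, p) = G' := hG.fderiv
  have ezy : fderiv ℝ (pdy z) (x, y) = A2.comp H := hzy.fderiv
  have ezx : fderiv ℝ (pdx z) (x, y) = A1.comp H := hzx.fderiv
  have hDv : Dv = pdy z (x, y) + pdx z (x, y) * p - p ^ 2 := rfl
  have hFv : Ffun z (x, y, p) = Dv⁻¹ := by rw [hFeq]
  have hGv : Gfun z (x, y, p) = (p - pdx z (x, y)) * Dv⁻¹ := by rw [hGeq]
  have e1 : pdy (pdy z) (x, y) = H ((0:ℝ), (1:ℝ)) ((0:ℝ), (1:ℝ)) := by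
    show fderiv ℝ (pdy z) (x, y) (0, 1) = _
    rw [ezy]; rfl
  have e2 : pdx (pdy z) (x, y) = H ((1:ℝ), (0:ℝ)) ((0:ℝ), (1:ℝ)) := by
    show fderiv ℝ (pdy z) (x, y) (1, 0) = _
    rw [ezy]; rfl
  have e3 : pdx (pdx z) (x, y) = H ((1:ℝ), (0:ℝ)) ((1:ℝ), (0:ℝ)) := by
    show fderiv ℝ (pdx z) (x, y) (1, 0) = _
    rw [ezx]; rfl
  unfold Efun pd1 pd2 pd3 GT
  rw [eF, eG, e1, e2, e3, hFv, hGv]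
  rw [hG', hFD', hD', hLx, hLy, hπ, hP3, hA1, hA2]
  simp only [ContinuousLinearMap.comp_apply, ContinuousLinearMap.add_apply,
    ContinuousLinearMap.sub_apply, ContinuousLinearMap.smul_apply,
    ContinuousLinearMap.neg_apply, ContinuousLinearMap.mulLeftRight_apply,
    ContinuousLinearMap.prod_apply, ContinuousLinearMap.coe_fst',
    ContinuousLinearMap.coe_snd', ContinuousLinearMap.apply_apply, smul_eq_mul]
  rw [hsymm, hDv]
  simp only [Prod.mk_zero_zero, map_zero, ContinuousLinearMap.zero_apply]
  have hDne : pdy z (x, y) + pdx z (x, y) * p - p ^ 2 ≠ 0 := by rw [← hDv]; exact hD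
  field_simp
  ring
end

section
/- Let U ⊆ ℝ² be open, z : ℝ² → ℝ twice continuously differentiable on U, and (x₀,y₀) ∈ U. Set D(x,y,p) = z_y(x,y) + z_x(x,y)·p − p², F = 1/D, G = (p − z_x)/D, and let E = ∂F/∂y + G·∂F/∂p − ∂G/∂x − F·∂G/∂p be the compatibility expression (partial derivatives in the independent variables (x,y,p)). Then the following are equivalent: (i) z satisfies the Gibbons–Tsarev equation z_yy + z_x·z_xy − z_y·z_xx + 1 = 0 at (x₀,y₀); (ii) E(x₀,y₀,p) = 0 for every p with D(x₀,y₀,p) ≠ 0; (iii) E(x₀,y₀,p) = 0 for some p with D(x₀,y₀,p) ≠ 0. -/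
open ContinuousLinearMap in
lemma key (z : ℝ × ℝ → ℝ) (x₀ y₀ p : ℝ) (hz2 : ContDiffAt ℝ 2 z (x₀, y₀))
    (hD : Dfun z (x₀, y₀, p) ≠ 0) :
    Efun z (x₀, y₀, p) = - GT z (x₀, y₀) / (Dfun z (x₀, y₀, p)) ^ 2 := by
  set w₀ : ℝ × ℝ := (x₀, y₀) with hw₀
  set q₀ : ℝ × ℝ × ℝ := (x₀, y₀, p) with hq₀
  have h1 : ContDiffAt ℝ 1 (fderiv ℝ z) w₀ := hz2.fderiv_right (by norm_num)
  set H := fderiv ℝ (fderiv ℝ z) w₀ with hHdef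
  have hH : HasFDerivAt (fderiv ℝ z) H w₀ := (h1.differentiableAt (by norm_num)).hasFDerivAt
  have hsymm := hz2.isSymmSndFDerivAt (by norm_num)
  have hA : HasFDerivAt (pdx z) ((apply ℝ ℝ ((1:ℝ),(0:ℝ))).comp H) w₀ :=
    ((apply ℝ ℝ ((1:ℝ),(0:ℝ))).hasFDerivAt).comp w₀ hH
  have hB : HasFDerivAt (pdy z) ((apply ℝ ℝ ((0:ℝ),(1:ℝ))).comp H) w₀ :=
    ((apply ℝ ℝ ((0:ℝ),(1:ℝ))).hasFDerivAt).comp w₀ hH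
  have hπ : HasFDerivAt (fun q : ℝ × ℝ × ℝ => (q.1, q.2.1))
      ((fst ℝ ℝ (ℝ × ℝ)).prod ((fst ℝ ℝ ℝ).comp (snd ℝ ℝ (ℝ × ℝ)))) q₀ :=
    (hasFDerivAt_fst).prodMk (hasFDerivAt_snd.fst)
  have hp : HasFDerivAt (fun q : ℝ × ℝ × ℝ => q.2.2)
      ((snd ℝ ℝ ℝ).comp (snd ℝ ℝ (ℝ × ℝ))) q₀ := hasFDerivAt_snd.snd
  have hAπ : HasFDerivAt (fun q : ℝ × ℝ × ℝ => pdx z (q.1, q.2.1)) (_ : ℝ × ℝ × ℝ →L[ℝ] ℝ) q₀ :=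
    hA.comp (g := pdx z) q₀ hπ
  have hBπ : HasFDerivAt (fun q : ℝ × ℝ × ℝ => pdy z (q.1, q.2.1)) (_ : ℝ × ℝ × ℝ →L[ℝ] ℝ) q₀ :=
    hB.comp (g := pdy z) q₀ hπ
  have hDeq : Dfun z = fun q : ℝ × ℝ × ℝ =>
      pdy z (q.1, q.2.1) + pdx z (q.1, q.2.1) * q.2.2 - q.2.2 * q.2.2 := by
    funext q; simp [Dfun, sq]
  have hDf := (hBπ.add (hAπ.mul hp)).sub (hp.mul hp)
  simp only [Pi.add_def, Pi.mul_def, Pi.sub_def] at hDf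
  rw [← hDeq] at hDf
  have hInv := (hasDerivAt_inv hD).comp_hasFDerivAt q₀ hDf
  have hFeq : Ffun z = (fun y : ℝ => y⁻¹) ∘ Dfun z := by
    funext q; simp [Ffun, one_div, Function.comp]
  have hGeq : Gfun z = fun q : ℝ × ℝ × ℝ =>
      (q.2.2 - pdx z (q.1, q.2.1)) * ((fun y : ℝ => y⁻¹) ∘ Dfun z) q := by
    funext q; simp [Gfun, div_eq_mul_inv, Function.comp]
  have hF := hInv
  rw [← hFeq] at hF
  have hG := (hp.sub hAπ).mul hInv
  simp only [Pi.add_def, Pi.mul_def, Pi.sub_def] at hG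
  rw [← hGeq] at hG
  have EF := hF.fderiv
  have EG := hG.fderiv
  simp only [Efun, pd1, pd2, pd3, EF, EG]
  simp only [ContinuousLinearMap.coe_comp', Function.comp, ContinuousLinearMap.prod_apply,
    ContinuousLinearMap.coe_fst', ContinuousLinearMap.coe_snd', ContinuousLinearMap.apply_apply,
    ContinuousLinearMap.add_apply, ContinuousLinearMap.coe_sub', Pi.sub_apply,
    ContinuousLinearMap.coe_smul', Pi.smul_apply, ContinuousLinearMap.smul_apply,
    smul_eq_mul, ContinuousLinearMap.coe_add', Pi.add_apply, ContinuousLinearMap.sub_apply]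
  have hs : H (0, 1) ((1:ℝ), (0:ℝ)) = H (1, 0) (0, 1) := hsymm (0, 1) (1, 0)
  have eGT : GT z w₀ = H (0, 1) (0, 1) + pdx z (x₀, y₀) * H (1, 0) (0, 1)
      - pdy z (x₀, y₀) * H (1, 0) (1, 0) + 1 := by
    simp only [GT, pdx, pdy, hA.fderiv, hB.fderiv, ContinuousLinearMap.coe_comp',
      Function.comp, ContinuousLinearMap.apply_apply]
    rfl
  have eD : Dfun z q₀ = pdy z (x₀, y₀) + pdx z (x₀, y₀) * p - p ^ 2 := rfl
  have eF : Ffun z q₀ = 1 / Dfun z q₀ := rfl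
  have eG : Gfun z q₀ = (p - pdx z (x₀, y₀)) / Dfun z q₀ := rfl
  have hD' : pdy z (x₀, y₀) + pdx z (x₀, y₀) * p - p ^ 2 ≠ 0 := by rw [← eD]; exact hD
  have hz00 : H ((0:ℝ), (0:ℝ)) = 0 := by
    have : ((0:ℝ), (0:ℝ)) = (0 : ℝ × ℝ) := rfl
    rw [this, map_zero]
  rw [hs, eGT, eF, eG, eD] at *
  simp only [hz00, ContinuousLinearMap.zero_apply]
  field_simp
  ring

/-- For `z` twice continuously differentiable near `(x₀,y₀)`, the
Gibbons–Tsarev equation at `(x₀,y₀)` is equivalent to vanishing of the compatibility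
expression `E` at `(x₀,y₀,p)` for every (equivalently, some) `p` with `D(x₀,y₀,p) ≠ 0`. -/
theorem statement1 (U : Set (ℝ × ℝ)) (hU : IsOpen U) (z : ℝ × ℝ → ℝ)
    (hz : ContDiffOn ℝ 2 z U) (x₀ y₀ : ℝ) (hmem : (x₀, y₀) ∈ U) :
    List.TFAE
      [GT z (x₀, y₀) = 0,
       ∀ p : ℝ, Dfun z (x₀, y₀, p) ≠ 0 → Efun z (x₀, y₀, p) = 0,
       ∃ p : ℝ, Dfun z (x₀, y₀, p) ≠ 0 ∧ Efun z (x₀, y₀, p) = 0] := by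
  have hz2 : ContDiffAt ℝ 2 z (x₀, y₀) := hz.contDiffAt (hU.mem_nhds hmem)
  tfae_have 1 → 2 := by
    intro h p hDp
    rw [key z x₀ y₀ p hz2 hDp, h]
    simp
  tfae_have 2 → 3 := by
    intro h
    obtain ⟨p, hp⟩ : ∃ p, Dfun z (x₀, y₀, p) ≠ 0 := by
      by_contra hc
      push_neg at hc
      have h0 : pdy z (x₀, y₀) = 0 := by simpa [Dfun] using hc 0
      have h1 : pdy z (x₀, y₀) + pdx z (x₀, y₀) - 1 = 0 := by simpa [Dfun] using hc 1
      have h2 : pdy z (x₀, y₀) - pdx z (x₀, y₀) - 1 = 0 := by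
        have := hc (-1); simp [Dfun] at this; linarith
      linarith
    exact ⟨p, hp, h p hp⟩
  tfae_have 3 → 1 := by
    rintro ⟨p, hDp, hE⟩
    have hk := key z x₀ y₀ p hz2 hDp
    rw [hE] at hk
    have h2 : (Dfun z (x₀, y₀, p)) ^ 2 ≠ 0 := pow_ne_zero _ hDp
    field_simp at hk
    linarith
  tfae_finish
end

section
/- Let U ⊆ ℝ² be open and z : ℝ² → ℝ twice continuously differentiable on U. On the open set Ω = {(x,y,p) ∈ ℝ³ : (x,y) ∈ U, D(x,y,p) ≠ 0}, where D = z_y + z_x·p − p², define the vector fields V₁(x,y,p) = (1, 0, 1/D) and V₂(x,y,p) = (0, 1, (p − z_x)/D). Then at every point (x,y,p) ∈ Ω the Lie bracket of V₁ and V₂ equals (0, 0, (z_yy + z_x·z_xy − z_y·z_xx + 1)(x,y) / D(x,y,p)²). In particular, V₁ and V₂ commute on Ω if and only if z satisfies the Gibbons–Tsarev equation on U. -/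
/-- Lie bracket of two vector fields on (an open subset of) `ℝ × ℝ × ℝ`:
`[V,W](q) = DW(q)·V(q) − DV(q)·W(q)`. -/
noncomputable def lieB (V W : ℝ × ℝ × ℝ → ℝ × ℝ × ℝ) (q : ℝ × ℝ × ℝ) : ℝ × ℝ × ℝ :=
  fderiv ℝ W q (V q) - fderiv ℝ V q (W q)

open ContinuousLinearMap

noncomputable def π3 : (ℝ × ℝ × ℝ) →L[ℝ] (ℝ × ℝ) :=
  (ContinuousLinearMap.fst ℝ ℝ (ℝ × ℝ)).prod
    ((ContinuousLinearMap.fst ℝ ℝ ℝ).comp (ContinuousLinearMap.snd ℝ ℝ (ℝ × ℝ)))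
noncomputable def P3 : (ℝ × ℝ × ℝ) →L[ℝ] ℝ :=
  (ContinuousLinearMap.snd ℝ ℝ ℝ).comp (ContinuousLinearMap.snd ℝ ℝ (ℝ × ℝ))

private theorem key_s2 (U : Set (ℝ × ℝ)) (hU : IsOpen U) (z : ℝ × ℝ → ℝ)
    (hz : ContDiffOn ℝ 2 z U) (q : ℝ × ℝ × ℝ) (hw : (q.1, q.2.1) ∈ U)
    (hD : Dfun z q ≠ 0) :
    lieB (fun q => (1, 0, Ffun z q)) (fun q => (0, 1, Gfun z q)) q
      = (0, 0, GT z (q.1, q.2.1) / (Dfun z q) ^ 2) := by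
  have hz2 : ContDiffAt ℝ 2 z (q.1, q.2.1) := (hz.contDiffAt (hU.mem_nhds hw))
  set w : ℝ × ℝ := (q.1, q.2.1) with hwdef
  set A := fderiv ℝ (fderiv ℝ z) w with hAdef
  have hAd : HasFDerivAt (fderiv ℝ z) A w :=
    ((hz2.fderiv_right (m := 1) (by norm_num)).differentiableAt one_ne_zero).hasFDerivAt
  have hsymm : A (0,1) (1,0) = A (1,0) (0,1) := hz2.isSymmSndFDerivAt (by norm_num) (0,1) (1,0)
  -- derivatives of first partials of z at w
  have hax : HasFDerivAt (pdx z) ((ContinuousLinearMap.apply ℝ ℝ ((1:ℝ),(0:ℝ))).comp A) w :=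
    (ContinuousLinearMap.apply ℝ ℝ ((1:ℝ),(0:ℝ))).hasFDerivAt.comp w hAd
  have hay : HasFDerivAt (pdy z) ((ContinuousLinearMap.apply ℝ ℝ ((0:ℝ),(1:ℝ))).comp A) w :=
    (ContinuousLinearMap.apply ℝ ℝ ((0:ℝ),(1:ℝ))).hasFDerivAt.comp w hAd
  -- lift to ℝ³
  have hπ : HasFDerivAt (fun u : ℝ × ℝ × ℝ => (u.1, u.2.1)) π3 q := π3.hasFDerivAt
  have hP : HasFDerivAt (fun u : ℝ × ℝ × ℝ => u.2.2) P3 q := P3.hasFDerivAt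
  have hax3 : HasFDerivAt (fun u : ℝ × ℝ × ℝ => pdx z (u.1, u.2.1))
      (((ContinuousLinearMap.apply ℝ ℝ ((1:ℝ),(0:ℝ))).comp A).comp π3) q := by have := hax.comp q hπ; exact this
  have hay3 : HasFDerivAt (fun u : ℝ × ℝ × ℝ => pdy z (u.1, u.2.1))
      (((ContinuousLinearMap.apply ℝ ℝ ((0:ℝ),(1:ℝ))).comp A).comp π3) q := by have := hay.comp q hπ; exact this
  -- derivative of D
  have hDf := (hay3.add (hax3.mul hP)).sub (hP.mul hP)
  have hDfun : HasFDerivAt (Dfun z) _ q :=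
    hDf.congr_of_eventuallyEq (Filter.Eventually.of_forall fun u => by rw [Dfun, sq]; rfl)
  -- derivative of F = D⁻¹
  have hFi := (hasFDerivAt_inv hD).comp q hDfun
  have hF : HasFDerivAt (Ffun z) _ q :=
    hFi.congr_of_eventuallyEq (Filter.Eventually.of_forall fun u => one_div _)
  -- derivative of G = (p - z_x) * D⁻¹
  have hG0 := (hP.sub hax3).mul hFi
  have hG : HasFDerivAt (Gfun z) _ q :=
    hG0.congr_of_eventuallyEq (Filter.Eventually.of_forall fun u => div_eq_mul_inv _ _)
  -- the vector fields
  have h1 : HasFDerivAt (fun u : ℝ × ℝ × ℝ => ((1:ℝ), (0:ℝ), Ffun z u)) _ q :=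
    HasFDerivAt.prodMk (hasFDerivAt_const (1:ℝ) q) (HasFDerivAt.prodMk (hasFDerivAt_const (0:ℝ) q) hF)
  have h2 : HasFDerivAt (fun u : ℝ × ℝ × ℝ => ((0:ℝ), (1:ℝ), Gfun z u)) _ q :=
    HasFDerivAt.prodMk (hasFDerivAt_const (0:ℝ) q) (HasFDerivAt.prodMk (hasFDerivAt_const (1:ℝ) q) hG)
  unfold lieB
  rw [h1.fderiv, h2.fderiv]
  have hGTv : GT z w = A (0,1) (0,1) + pdx z w * (A (1,0) (0,1)) - pdy z w * (A (1,0) (1,0)) + 1 := by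
    rw [GT, pdx, pdx, pdx, pdy, pdy, hax.fderiv, hay.fderiv]
    simp
  have hDval : Dfun z q = pdy z w + pdx z w * q.2.2 - q.2.2 ^ 2 := rfl
  simp only [ContinuousLinearMap.prod_apply, ContinuousLinearMap.comp_apply,
    ContinuousLinearMap.add_apply, ContinuousLinearMap.sub_apply, ContinuousLinearMap.smul_apply,
    ContinuousLinearMap.smulRight_apply, ContinuousLinearMap.one_apply,
    ContinuousLinearMap.toSpanSingleton_apply, Pi.sub_apply,
    ContinuousLinearMap.zero_apply, ContinuousLinearMap.coe_fst', ContinuousLinearMap.coe_snd',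
    ContinuousLinearMap.apply_apply, π3, P3, smul_eq_mul, Prod.mk_sub_mk, sub_zero, zero_sub,
    Prod.mk.injEq, hGTv, hDval]
  refine ⟨trivial, trivial, ?_⟩
  have hFv : Ffun z q = (Dfun z q)⁻¹ := one_div _
  have hGv : Gfun z q = (q.2.2 - pdx z (q.1, q.2.1)) * (Dfun z q)⁻¹ := div_eq_mul_inv _ _
  have hcomp : ((fun x : ℝ => x⁻¹) ∘ Dfun z) q = (Dfun z q)⁻¹ := rfl
  have hD' : pdy z w + pdx z w * q.2.2 - q.2.2 ^ 2 ≠ 0 := hD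
  rw [hcomp, hFv, hGv, hsymm, hDval]
  simp only [← hwdef]
  have hD3 : pdy z w + q.2.2 * pdx z w - q.2.2 ^ 2 ≠ 0 := by rw [mul_comm]; exact hD'
  field_simp
  ring

/-- On `Ω = {(x,y,p) : (x,y) ∈ U, D ≠ 0}`, the Lie bracket of
`V₁ = (1,0,1/D)` and `V₂ = (0,1,(p−z_x)/D)` is `(0,0,GT/D²)`; in particular the two
fields commute on `Ω` iff `z` satisfies the Gibbons–Tsarev equation on `U`. -/
theorem statement2 (U : Set (ℝ × ℝ)) (hU : IsOpen U) (z : ℝ × ℝ → ℝ)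
    (hz : ContDiffOn ℝ 2 z U)
    (Ω : Set (ℝ × ℝ × ℝ)) (hΩ : Ω = {q | (q.1, q.2.1) ∈ U ∧ Dfun z q ≠ 0})
    (V₁ V₂ : ℝ × ℝ × ℝ → ℝ × ℝ × ℝ)
    (hV₁ : V₁ = fun q => (1, 0, Ffun z q))
    (hV₂ : V₂ = fun q => (0, 1, Gfun z q)) :
    (∀ q ∈ Ω, lieB V₁ V₂ q = (0, 0, GT z (q.1, q.2.1) / (Dfun z q) ^ 2)) ∧
    ((∀ q ∈ Ω, lieB V₁ V₂ q = 0) ↔ ∀ q ∈ U, GT z q = 0) := by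
  subst hΩ hV₁ hV₂
  have hkey : ∀ q : ℝ × ℝ × ℝ, (q.1, q.2.1) ∈ U → Dfun z q ≠ 0 →
      lieB (fun q => ((1:ℝ), (0:ℝ), Ffun z q)) (fun q => ((0:ℝ), (1:ℝ), Gfun z q)) q
        = (0, 0, GT z (q.1, q.2.1) / (Dfun z q) ^ 2) := key_s2 U hU z hz
  refine ⟨fun q hq => hkey q hq.1 hq.2, ?_, ?_⟩
  · intro h w hwU
    set a := pdx z w with ha
    set b := pdy z w with hb
    set p : ℝ := |a| + |b| + 1 with hp
    have hmem : (((w.1, (w.2, p)) : ℝ × ℝ × ℝ).1, ((w.1, (w.2, p)) : ℝ × ℝ × ℝ).2.1) ∈ U := by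
      simpa using hwU
    have hDne : Dfun z (w.1, w.2, p) ≠ 0 := by
      have hDv : Dfun z (w.1, w.2, p) = pdy z (w.1, w.2) + pdx z (w.1, w.2) * p - p ^ 2 := rfl
      rw [hDv]
      have h1 : pdy z (w.1, w.2) = b := by rw [hb]
      have h2 : pdx z (w.1, w.2) = a := by rw [ha]
      rw [h1, h2]
      nlinarith [le_abs_self a, le_abs_self b, neg_abs_le a, neg_abs_le b, abs_nonneg a,
        abs_nonneg b]
    have h0 := h (w.1, w.2, p) ⟨hmem, hDne⟩
    rw [hkey _ hmem hDne] at h0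
    have h3 : GT z ((w.1, (w.2, p)).1, ((w.1, (w.2, p)) : ℝ × ℝ × ℝ).2.1)
        / (Dfun z (w.1, w.2, p)) ^ 2 = 0 := congrArg (fun v : ℝ × ℝ × ℝ => v.2.2) h0
    have h4 : GT z w / (Dfun z (w.1, w.2, p)) ^ 2 = 0 := by simpa using h3
    have h5 := (div_eq_zero_iff.1 h4).resolve_right (pow_ne_zero 2 hDne)
    exact h5
  · intro h q hq
    rw [hkey q hq.1 hq.2, h _ hq.1, zero_div]
    rfl
end

section
/- Let U ⊆ ℝ² be open and z : ℝ² → ℝ twice continuously differentiable on U, and set D(x,y,p) = z_y(x,y) + z_x(x,y)·p − p². Suppose that for every (x₀,y₀) ∈ U and every p₀ ∈ ℝ with D(x₀,y₀,p₀) ≠ 0 there exist an open neighborhood W ⊆ U of (x₀,y₀) and a twice continuously differentiable function φ : W → ℝ with φ(x₀,y₀) = p₀, D(x,y,φ(x,y)) ≠ 0 on W, and φ_x = 1/D(x,y,φ), φ_y = −(z_x − φ)/D(x,y,φ) on W. Then z satisfies the Gibbons–Tsarev equation z_yy + z_x·z_xy − z_y·z_xx + 1 = 0 at every point of U. -/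
lemma pd_mixed (f : ℝ × ℝ → ℝ) (q : ℝ × ℝ) (hf : ContDiffAt ℝ 2 f q) :
    DifferentiableAt ℝ (pdx f) q ∧ DifferentiableAt ℝ (pdy f) q ∧
      pdy (pdx f) q = pdx (pdy f) q := by
  have h1 : ContDiffAt ℝ 1 (fderiv ℝ f) q := hf.fderiv_right (by norm_num)
  have hdf : DifferentiableAt ℝ (fderiv ℝ f) q := h1.differentiableAt (by norm_num)
  have key : ∀ v : ℝ × ℝ, DifferentiableAt ℝ (fun p => fderiv ℝ f p v) q ∧
      fderiv ℝ (fun p => fderiv ℝ f p v) q = (fderiv ℝ (fderiv ℝ f) q).flip v := by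
    intro v
    have hd : DifferentiableAt ℝ (fun p => fderiv ℝ f p v) q :=
      hdf.clm_apply (differentiableAt_const v)
    refine ⟨hd, ?_⟩
    have := fderiv_clm_apply (c := fderiv ℝ f) (u := fun _ => v) hdf (differentiableAt_const v)
    simpa using this
  have hsymm := hf.isSymmSndFDerivAt (by simp)
  refine ⟨(key (1,0)).1, (key (0,1)).1, ?_⟩
  have e1 : pdy (pdx f) q = fderiv ℝ (fderiv ℝ f) q (0,1) (1,0) := by
    show fderiv ℝ (fun p => fderiv ℝ f p (1,0)) q (0,1) = _
    rw [(key (1,0)).2]; rfl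
  have e2 : pdx (pdy f) q = fderiv ℝ (fderiv ℝ f) q (1,0) (0,1) := by
    show fderiv ℝ (fun p => fderiv ℝ f p (0,1)) q (1,0) = _
    rw [(key (0,1)).2]; rfl
  rw [e1, e2, hsymm]

/-- If system (1) is locally solvable through every admissible initial
point `(x₀,y₀,p₀)` (with `D(x₀,y₀,p₀) ≠ 0`), then `z` satisfies the Gibbons–Tsarev
equation everywhere on `U`. -/
theorem statement8 (U : Set (ℝ × ℝ)) (hU : IsOpen U) (z : ℝ × ℝ → ℝ)
    (hz : ContDiffOn ℝ 2 z U)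
    (hsol : ∀ x₀ y₀ : ℝ, (x₀, y₀) ∈ U → ∀ p₀ : ℝ, Dfun z (x₀, y₀, p₀) ≠ 0 →
      ∃ W : Set (ℝ × ℝ), IsOpen W ∧ W ⊆ U ∧ (x₀, y₀) ∈ W ∧
        ∃ φ : ℝ × ℝ → ℝ, ContDiffOn ℝ 2 φ W ∧ φ (x₀, y₀) = p₀ ∧
          (∀ q ∈ W, Dfun z (q.1, q.2, φ q) ≠ 0) ∧
          (∀ q ∈ W, pdx φ q = 1 / Dfun z (q.1, q.2, φ q)) ∧
          (∀ q ∈ W, pdy φ q = -(pdx z q - φ q) / Dfun z (q.1, q.2, φ q))) :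
    ∀ q ∈ U, GT z q = 0 := by
  rintro ⟨x₀, y₀⟩ hq
  have hzC : ContDiffAt ℝ 2 z (x₀, y₀) := hz.contDiffAt (hU.mem_nhds hq)
  obtain ⟨hzxd, hzyd, hzsymm⟩ := pd_mixed z (x₀, y₀) hzC
  -- choose an admissible p₀
  have hD0 : Dfun z (x₀, y₀, |pdx z (x₀, y₀)| + |pdy z (x₀, y₀)| + 1) ≠ 0 := by
    have h : Dfun z (x₀, y₀, |pdx z (x₀, y₀)| + |pdy z (x₀, y₀)| + 1)
        = pdy z (x₀, y₀) + pdx z (x₀, y₀) * (|pdx z (x₀, y₀)| + |pdy z (x₀, y₀)| + 1)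
          - (|pdx z (x₀, y₀)| + |pdy z (x₀, y₀)| + 1) ^ 2 := rfl
    rw [h]
    have h1 := le_abs_self (pdx z (x₀, y₀))
    have h2 := le_abs_self (pdy z (x₀, y₀))
    have h3 := abs_nonneg (pdx z (x₀, y₀))
    have h4 := abs_nonneg (pdy z (x₀, y₀))
    nlinarith [mul_nonneg h3 h4, sq_nonneg (|pdx z (x₀, y₀)| + |pdy z (x₀, y₀)|)]
  obtain ⟨W, hWopen, hWU, hq₀W, φ, hφC2, hφval, hDne, hpdxφ, hpdyφ⟩ :=
    hsol x₀ y₀ hq _ hD0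
  have hφC : ContDiffAt ℝ 2 φ (x₀, y₀) := hφC2.contDiffAt (hWopen.mem_nhds hq₀W)
  obtain ⟨hφxd, hφyd, hφsymm⟩ := pd_mixed φ (x₀, y₀) hφC
  have hφd : DifferentiableAt ℝ φ (x₀, y₀) := hφC.differentiableAt (by norm_num)
  set A : ℝ × ℝ → ℝ := fun q => pdy z q + pdx z q * φ q - φ q * φ q with hAdef
  have hDA : ∀ q : ℝ × ℝ, Dfun z (q.1, q.2, φ q) = A q := by
    intro q
    show pdy z (q.1, q.2) + pdx z (q.1, q.2) * φ q - φ q ^ 2 = _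
    rw [hAdef]; simp; ring
  have hA0 : A (x₀, y₀) ≠ 0 := (hDA (x₀, y₀)) ▸ hDne (x₀, y₀) hq₀W
  -- derivative facts
  have Hzx := hzxd.hasFDerivAt
  have Hzy := hzyd.hasFDerivAt
  have Hφ := hφd.hasFDerivAt
  have HA : HasFDerivAt A
      (fderiv ℝ (pdy z) (x₀, y₀) +
        (pdx z (x₀, y₀) • fderiv ℝ φ (x₀, y₀) + φ (x₀, y₀) • fderiv ℝ (pdx z) (x₀, y₀)) -
        (φ (x₀, y₀) • fderiv ℝ φ (x₀, y₀) + φ (x₀, y₀) • fderiv ℝ φ (x₀, y₀))) (x₀, y₀) :=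
    (Hzy.add (Hzx.mul Hφ)).sub (Hφ.mul Hφ)
  have HF : HasFDerivAt (fun q => (A q)⁻¹)
      ((-(A (x₀, y₀) ^ 2)⁻¹) •
        (fderiv ℝ (pdy z) (x₀, y₀) +
          (pdx z (x₀, y₀) • fderiv ℝ φ (x₀, y₀) + φ (x₀, y₀) • fderiv ℝ (pdx z) (x₀, y₀)) -
          (φ (x₀, y₀) • fderiv ℝ φ (x₀, y₀) + φ (x₀, y₀) • fderiv ℝ φ (x₀, y₀)))) (x₀, y₀) :=
    (hasDerivAt_inv hA0).comp_hasFDerivAt (x₀, y₀) HA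
  have HG : HasFDerivAt (fun q => (φ q - pdx z q) * (A q)⁻¹)
      ((φ (x₀, y₀) - pdx z (x₀, y₀)) •
        ((-(A (x₀, y₀) ^ 2)⁻¹) •
          (fderiv ℝ (pdy z) (x₀, y₀) +
            (pdx z (x₀, y₀) • fderiv ℝ φ (x₀, y₀) + φ (x₀, y₀) • fderiv ℝ (pdx z) (x₀, y₀)) -
            (φ (x₀, y₀) • fderiv ℝ φ (x₀, y₀) + φ (x₀, y₀) • fderiv ℝ φ (x₀, y₀)))) +
       (A (x₀, y₀))⁻¹ • (fderiv ℝ φ (x₀, y₀) - fderiv ℝ (pdx z) (x₀, y₀))) (x₀, y₀) :=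
    (Hφ.sub Hzx).mul HF
  -- eventual equalities
  have e1 : pdx φ =ᶠ[nhds (x₀, y₀)] fun q => (A q)⁻¹ := by
    filter_upwards [hWopen.mem_nhds hq₀W] with q hqW
    rw [hpdxφ q hqW, hDA q, one_div]
  have e2 : pdy φ =ᶠ[nhds (x₀, y₀)] fun q => (φ q - pdx z q) * (A q)⁻¹ := by
    filter_upwards [hWopen.mem_nhds hq₀W] with q hqW
    rw [hpdyφ q hqW, hDA q, neg_div, div_eq_mul_inv, ← neg_mul, neg_sub]
  -- mixed partials
  have d1 : pdy (pdx φ) (x₀, y₀) =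
      (-(A (x₀, y₀) ^ 2)⁻¹) *
        (pdy (pdy z) (x₀, y₀) +
          (pdx z (x₀, y₀) * pdy φ (x₀, y₀) + φ (x₀, y₀) * pdy (pdx z) (x₀, y₀)) -
          (φ (x₀, y₀) * pdy φ (x₀, y₀) + φ (x₀, y₀) * pdy φ (x₀, y₀))) := by
    show fderiv ℝ (pdx φ) (x₀, y₀) (0, 1) = _
    rw [e1.fderiv_eq, HF.fderiv]
    simp [pdy]
  have d2 : pdx (pdy φ) (x₀, y₀) =
      (φ (x₀, y₀) - pdx z (x₀, y₀)) *
        ((-(A (x₀, y₀) ^ 2)⁻¹) *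
          (pdx (pdy z) (x₀, y₀) +
            (pdx z (x₀, y₀) * pdx φ (x₀, y₀) + φ (x₀, y₀) * pdx (pdx z) (x₀, y₀)) -
            (φ (x₀, y₀) * pdx φ (x₀, y₀) + φ (x₀, y₀) * pdx φ (x₀, y₀)))) +
       (A (x₀, y₀))⁻¹ * (pdx φ (x₀, y₀) - pdx (pdx z) (x₀, y₀)) := by
    show fderiv ℝ (pdy φ) (x₀, y₀) (1, 0) = _
    rw [e2.fderiv_eq, HG.fderiv]
    simp [pdx]
  -- values of first derivatives of φ at the base point
  have hu : pdx φ (x₀, y₀) = (A (x₀, y₀))⁻¹ := by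
    rw [hpdxφ (x₀, y₀) hq₀W, hDA (x₀, y₀), one_div]
  have hv : pdy φ (x₀, y₀) = (φ (x₀, y₀) - pdx z (x₀, y₀)) * (A (x₀, y₀))⁻¹ := by
    rw [hpdyφ (x₀, y₀) hq₀W, hDA (x₀, y₀), neg_div, div_eq_mul_inv, ← neg_mul, neg_sub]
  have hmix := hφsymm
  rw [d1, d2, hu, hv, hzsymm] at hmix
  -- final algebra
  have hAq0 : A (x₀, y₀) = pdy z (x₀, y₀) + pdx z (x₀, y₀) * φ (x₀, y₀) - φ (x₀, y₀) * φ (x₀, y₀) := rfl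
  rw [hAq0] at hmix
  rw [hAq0] at hA0
  show pdy (pdy z) (x₀, y₀) + pdx z (x₀, y₀) * pdx (pdy z) (x₀, y₀)
      - pdy z (x₀, y₀) * pdx (pdx z) (x₀, y₀) + 1 = 0
  have hA0' : pdy z (x₀, y₀) + pdx z (x₀, y₀) * φ (x₀, y₀) - φ (x₀, y₀) ^ 2 ≠ 0 := by
    intro h; apply hA0; linear_combination h
  linear_combination (norm := (field_simp; ring1))
    (-((pdy z (x₀, y₀) + pdx z (x₀, y₀) * φ (x₀, y₀) - φ (x₀, y₀) * φ (x₀, y₀)) ^ 2)) * hmix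
end

section
/- Let U ⊆ ℝ² be open, z : ℝ² → ℝ twice continuously differentiable on U, and (x₀,y₀) ∈ U. Set D = z_y + z_x·p − p². Suppose there exist p₀ with D(x₀,y₀,p₀) ≠ 0, an open neighborhood Ω' of (x₀,y₀,p₀) contained in {(x,y,p) : (x,y) ∈ U, D ≠ 0}, and a twice continuously differentiable ψ : Ω' → ℝ with ∂ψ/∂p(x₀,y₀,p₀) ≠ 0, satisfying ∂ψ/∂x = −(1/D)·∂ψ/∂p and ∂ψ/∂y = ((z_x − p)/D)·∂ψ/∂p on Ω'. Then z satisfies the Gibbons–Tsarev equation z_yy + z_x·z_xy − z_y·z_xx + 1 = 0 at (x₀,y₀). -/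
noncomputable def projXY : (ℝ × ℝ × ℝ) →L[ℝ] ℝ × ℝ :=
  (ContinuousLinearMap.fst ℝ ℝ (ℝ × ℝ)).prod
    ((ContinuousLinearMap.fst ℝ ℝ ℝ).comp (ContinuousLinearMap.snd ℝ ℝ (ℝ × ℝ)))

noncomputable def projP : (ℝ × ℝ × ℝ) →L[ℝ] ℝ :=
  (ContinuousLinearMap.snd ℝ ℝ ℝ).comp (ContinuousLinearMap.snd ℝ ℝ (ℝ × ℝ))

@[simp] lemma projXY_apply (q : ℝ × ℝ × ℝ) : projXY q = (q.1, q.2.1) := rfl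
@[simp] lemma projP_apply (q : ℝ × ℝ × ℝ) : projP q = q.2.2 := rfl

lemma pd_swap_aux {E : Type*} [NormedAddCommGroup E] [NormedSpace ℝ E]
    (f : E → ℝ) (x : E) (h : DifferentiableAt ℝ (fderiv ℝ f) x)
    (hs : IsSymmSndFDerivAt ℝ f x) (v w : E) :
    fderiv ℝ (fun y => fderiv ℝ f y v) x w = fderiv ℝ (fun y => fderiv ℝ f y w) x v := by
  rw [(h.hasFDerivAt.clm_apply (hasFDerivAt_const v x)).fderiv,
    (h.hasFDerivAt.clm_apply (hasFDerivAt_const w x)).fderiv]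
  simp
  exact (hs w v)

lemma pd_diffAt_aux {E : Type*} [NormedAddCommGroup E] [NormedSpace ℝ E]
    {f : E → ℝ} {s : Set E} (hf : ContDiffOn ℝ 2 f s) (hs : IsOpen s) {x : E} (hx : x ∈ s)
    (v : E) : DifferentiableAt ℝ (fun y => fderiv ℝ f y v) x := by
  have h1 : ContDiffOn ℝ 1 (fderiv ℝ f) s := hf.fderiv_of_isOpen hs (by norm_num)
  have h2 : ContDiffOn ℝ 1 (fun y => fderiv ℝ f y v) s := h1.clm_apply contDiffOn_const
  exact ((h2.differentiableOn one_ne_zero).differentiableAt (hs.mem_nhds hx))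

lemma fderiv_diffAt_aux {E : Type*} [NormedAddCommGroup E] [NormedSpace ℝ E]
    {f : E → ℝ} {s : Set E} (hf : ContDiffOn ℝ 2 f s) (hs : IsOpen s) {x : E} (hx : x ∈ s) :
    DifferentiableAt ℝ (fderiv ℝ f) x :=
  (((hf.fderiv_of_isOpen (m := 1) hs (by norm_num)).differentiableOn one_ne_zero).differentiableAt
    (hs.mem_nhds hx))

/-- Existence of a nondegenerate `C²` local solution `ψ` of the
Lax-type system (2) near some admissible `(x₀,y₀,p₀)` forces the Gibbons–Tsarev
equation at `(x₀,y₀)`. -/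
theorem statement12 (U : Set (ℝ × ℝ)) (hU : IsOpen U) (z : ℝ × ℝ → ℝ)
    (hz : ContDiffOn ℝ 2 z U) (x₀ y₀ : ℝ) (hmem : (x₀, y₀) ∈ U)
    (p₀ : ℝ) (hD : Dfun z (x₀, y₀, p₀) ≠ 0)
    (Ω' : Set (ℝ × ℝ × ℝ)) (hΩo : IsOpen Ω') (hmem' : (x₀, y₀, p₀) ∈ Ω')
    (hΩsub : Ω' ⊆ {q : ℝ × ℝ × ℝ | (q.1, q.2.1) ∈ U ∧ Dfun z q ≠ 0})
    (ψ : ℝ × ℝ × ℝ → ℝ) (hψ : ContDiffOn ℝ 2 ψ Ω')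
    (hψp : pd3 ψ (x₀, y₀, p₀) ≠ 0)
    (hψx : ∀ q ∈ Ω', pd1 ψ q = -(1 / Dfun z q) * pd3 ψ q)
    (hψy : ∀ q ∈ Ω', pd2 ψ q = ((pdx z (q.1, q.2.1) - q.2.2) / Dfun z q) * pd3 ψ q) :
    GT z (x₀, y₀) = 0 := by
  -- basic facts about z
  have hfzd : DifferentiableAt ℝ (fderiv ℝ z) (x₀, y₀) := fderiv_diffAt_aux hz hU hmem
  have hzsymm : IsSymmSndFDerivAt ℝ z (x₀, y₀) :=
    (hz.contDiffAt (hU.mem_nhds hmem)).isSymmSndFDerivAt (by simp)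
  have hzx : DifferentiableAt ℝ (pdx z) (x₀, y₀) := pd_diffAt_aux hz hU hmem (1, 0)
  have hzy : DifferentiableAt ℝ (pdy z) (x₀, y₀) := pd_diffAt_aux hz hU hmem (0, 1)
  -- basic facts about ψ
  have hψd1 : DifferentiableAt ℝ (fun q => fderiv ℝ ψ q (1, 0, 0)) (x₀, y₀, p₀) :=
    pd_diffAt_aux hψ hΩo hmem' (1, 0, 0)
  have hψd2 : DifferentiableAt ℝ (fun q => fderiv ℝ ψ q (0, 1, 0)) (x₀, y₀, p₀) :=
    pd_diffAt_aux hψ hΩo hmem' (0, 1, 0)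
  have hψd3 : DifferentiableAt ℝ (fun q => fderiv ℝ ψ q (0, 0, 1)) (x₀, y₀, p₀) :=
    pd_diffAt_aux hψ hΩo hmem' (0, 0, 1)
  have hfψd : DifferentiableAt ℝ (fderiv ℝ ψ) (x₀, y₀, p₀) := fderiv_diffAt_aux hψ hΩo hmem'
  have hψsymm : IsSymmSndFDerivAt ℝ ψ (x₀, y₀, p₀) :=
    (hψ.contDiffAt (hΩo.mem_nhds hmem')).isSymmSndFDerivAt (by simp)
  -- derivative of Dfun z at the base point
  have hzxπ : HasFDerivAt (fun q : ℝ × ℝ × ℝ => pdx z (q.1, q.2.1))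
      ((fderiv ℝ (pdx z) (x₀, y₀)).comp projXY) (x₀, y₀, p₀) :=
    by have := (hzx.hasFDerivAt).comp (x₀, y₀, p₀) projXY.hasFDerivAt; exact this
  have hzyπ : HasFDerivAt (fun q : ℝ × ℝ × ℝ => pdy z (q.1, q.2.1))
      ((fderiv ℝ (pdy z) (x₀, y₀)).comp projXY) (x₀, y₀, p₀) :=
    by have := (hzy.hasFDerivAt).comp (x₀, y₀, p₀) projXY.hasFDerivAt; exact this
  have hP : HasFDerivAt (fun q : ℝ × ℝ × ℝ => q.2.2) projP (x₀, y₀, p₀) := projP.hasFDerivAt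
  have hsq : HasFDerivAt (fun q : ℝ × ℝ × ℝ => q.2.2 ^ 2) (p₀ • projP + p₀ • projP)
      (x₀, y₀, p₀) := by
    have := hP.mul hP
    simpa [pow_two, Pi.mul_def] using this
  have hDd : HasFDerivAt (Dfun z)
      ((fderiv ℝ (pdy z) (x₀, y₀)).comp projXY +
        (pdx z (x₀, y₀) • projP + p₀ • ((fderiv ℝ (pdx z) (x₀, y₀)).comp projXY)) -
        (p₀ • projP + p₀ • projP)) (x₀, y₀, p₀) :=
    (hzyπ.add (hzxπ.mul hP)).sub hsq
  have hDdiff : DifferentiableAt ℝ (Dfun z) (x₀, y₀, p₀) := hDd.differentiableAt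
  have hD1v : fderiv ℝ (Dfun z) (x₀, y₀, p₀) (1, 0, 0)
      = pdx (pdy z) (x₀, y₀) + pdx (pdx z) (x₀, y₀) * p₀ := by
    rw [hDd.fderiv]
    simp [pdx, pdy]
    ring
  have hD2v : fderiv ℝ (Dfun z) (x₀, y₀, p₀) (0, 1, 0)
      = pdy (pdy z) (x₀, y₀) + pdy (pdx z) (x₀, y₀) * p₀ := by
    rw [hDd.fderiv]
    simp [pdx, pdy]
    ring
  have h00 : ((0 : ℝ), (0 : ℝ)) = (0 : ℝ × ℝ) := rfl
  have hD3v : fderiv ℝ (Dfun z) (x₀, y₀, p₀) (0, 0, 1)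
      = pdx z (x₀, y₀) - 2 * p₀ := by
    rw [hDd.fderiv]
    simp [h00]
    ring
  -- derivative of N at the base point
  have hNd : HasFDerivAt (fun q : ℝ × ℝ × ℝ => pdx z (q.1, q.2.1) - q.2.2)
      ((fderiv ℝ (pdx z) (x₀, y₀)).comp projXY - projP) (x₀, y₀, p₀) := hzxπ.sub hP
  have hN1v : fderiv ℝ (fun q : ℝ × ℝ × ℝ => pdx z (q.1, q.2.1) - q.2.2) (x₀, y₀, p₀) (1, 0, 0)
      = pdx (pdx z) (x₀, y₀) := by
    rw [hNd.fderiv]; simp [pdx]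
  have hN3v : fderiv ℝ (fun q : ℝ × ℝ × ℝ => pdx z (q.1, q.2.1) - q.2.2) (x₀, y₀, p₀) (0, 0, 1)
      = -1 := by
    rw [hNd.fderiv]; simp [h00]
  -- identity I : D * ψ_x = -ψ_p near the base point
  have hIev : (fun q => Dfun z q * fderiv ℝ ψ q (1, 0, 0)) =ᶠ[nhds (x₀, y₀, p₀)]
      (fun q => -fderiv ℝ ψ q (0, 0, 1)) := by
    filter_upwards [hΩo.mem_nhds hmem'] with q hq
    have h := hψx q hq
    simp only [pd1, pd3] at h
    have hDq := (hΩsub hq).2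
    rw [h]
    field_simp
  have hI := hIev.fderiv_eq (𝕜 := ℝ)
  rw [fderiv_fun_mul hDdiff hψd1, fderiv_fun_neg] at hI
  have hIv : ∀ v : ℝ × ℝ × ℝ,
      Dfun z (x₀, y₀, p₀) * fderiv ℝ (fun q => fderiv ℝ ψ q (1, 0, 0)) (x₀, y₀, p₀) v
        + fderiv ℝ ψ (x₀, y₀, p₀) (1, 0, 0) * fderiv ℝ (Dfun z) (x₀, y₀, p₀) v
      = -(fderiv ℝ (fun q => fderiv ℝ ψ q (0, 0, 1)) (x₀, y₀, p₀) v) := by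
    intro v
    have h := congrArg (fun L : (ℝ × ℝ × ℝ) →L[ℝ] ℝ => L v) hI
    simpa [smul_eq_mul] using h
  -- identity II : D * ψ_y = N * ψ_p near the base point
  have hIIev : (fun q => Dfun z q * fderiv ℝ ψ q (0, 1, 0)) =ᶠ[nhds (x₀, y₀, p₀)]
      (fun q => (pdx z (q.1, q.2.1) - q.2.2) * fderiv ℝ ψ q (0, 0, 1)) := by
    filter_upwards [hΩo.mem_nhds hmem'] with q hq
    have h := hψy q hq
    simp only [pd2, pd3] at h
    have hDq := (hΩsub hq).2
    rw [h]
    field_simp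
  have hII := hIIev.fderiv_eq (𝕜 := ℝ)
  rw [fderiv_fun_mul hDdiff hψd2, fderiv_fun_mul hNd.differentiableAt hψd3] at hII
  have hIIv : ∀ v : ℝ × ℝ × ℝ,
      Dfun z (x₀, y₀, p₀) * fderiv ℝ (fun q => fderiv ℝ ψ q (0, 1, 0)) (x₀, y₀, p₀) v
        + fderiv ℝ ψ (x₀, y₀, p₀) (0, 1, 0) * fderiv ℝ (Dfun z) (x₀, y₀, p₀) v
      = (pdx z (x₀, y₀) - p₀) * fderiv ℝ (fun q => fderiv ℝ ψ q (0, 0, 1)) (x₀, y₀, p₀) v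
        + fderiv ℝ ψ (x₀, y₀, p₀) (0, 0, 1)
          * fderiv ℝ (fun q : ℝ × ℝ × ℝ => pdx z (q.1, q.2.1) - q.2.2) (x₀, y₀, p₀) v := by
    intro v
    have h := congrArg (fun L : (ℝ × ℝ × ℝ) →L[ℝ] ℝ => L v) hII
    simpa [smul_eq_mul] using h
  -- the four second-order equations
  have h1 := hIv (0, 1, 0)
  have h3 := hIv (0, 0, 1)
  have h2 := hIIv (1, 0, 0)
  have h4 := hIIv (0, 0, 1)
  rw [hD2v] at h1
  rw [hD3v] at h3
  rw [hD1v, hN1v] at h2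
  rw [hD3v, hN3v] at h4
  -- symmetry of the second derivatives of ψ
  have hs12 : fderiv ℝ (fun y => fderiv ℝ ψ y ((1 : ℝ), (0 : ℝ), (0 : ℝ))) (x₀, y₀, p₀) (0, 1, 0)
      = fderiv ℝ (fun y => fderiv ℝ ψ y ((0 : ℝ), (1 : ℝ), (0 : ℝ))) (x₀, y₀, p₀) (1, 0, 0) :=
    pd_swap_aux ψ (x₀, y₀, p₀) hfψd hψsymm (1, 0, 0) (0, 1, 0)
  have hs13 : fderiv ℝ (fun y => fderiv ℝ ψ y ((1 : ℝ), (0 : ℝ), (0 : ℝ))) (x₀, y₀, p₀) (0, 0, 1)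
      = fderiv ℝ (fun y => fderiv ℝ ψ y ((0 : ℝ), (0 : ℝ), (1 : ℝ))) (x₀, y₀, p₀) (1, 0, 0) :=
    pd_swap_aux ψ (x₀, y₀, p₀) hfψd hψsymm (1, 0, 0) (0, 0, 1)
  have hs23 : fderiv ℝ (fun y => fderiv ℝ ψ y ((0 : ℝ), (0 : ℝ), (1 : ℝ))) (x₀, y₀, p₀) (0, 1, 0)
      = fderiv ℝ (fun y => fderiv ℝ ψ y ((0 : ℝ), (1 : ℝ), (0 : ℝ))) (x₀, y₀, p₀) (0, 0, 1) :=
    pd_swap_aux ψ (x₀, y₀, p₀) hfψd hψsymm (0, 0, 1) (0, 1, 0)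
  rw [hs12, hs23] at h1
  rw [hs13] at h3
  -- the first-order relations at the base point
  have hx0 := hψx (x₀, y₀, p₀) hmem'
  have hy0 := hψy (x₀, y₀, p₀) hmem'
  simp only [pd1, pd2, pd3] at hx0 hy0
  have h5 : Dfun z (x₀, y₀, p₀) * fderiv ℝ ψ (x₀, y₀, p₀) (1, 0, 0)
      = -fderiv ℝ ψ (x₀, y₀, p₀) (0, 0, 1) := by
    rw [hx0]; field_simp
  have h6 : Dfun z (x₀, y₀, p₀) * fderiv ℝ ψ (x₀, y₀, p₀) (0, 1, 0)
      = (pdx z (x₀, y₀) - p₀) * fderiv ℝ ψ (x₀, y₀, p₀) (0, 0, 1) := by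
    rw [hy0]; field_simp
  -- eliminate: the zero-curvature scalar relation
  have key : Dfun z (x₀, y₀, p₀) * fderiv ℝ ψ (x₀, y₀, p₀) (0, 0, 1) *
      ((pdy (pdy z) (x₀, y₀) + pdy (pdx z) (x₀, y₀) * p₀)
        + (pdx z (x₀, y₀) - p₀) * (pdx (pdy z) (x₀, y₀) + pdx (pdx z) (x₀, y₀) * p₀)
        + 1 - Dfun z (x₀, y₀, p₀) * pdx (pdx z) (x₀, y₀)) = 0 := by
    linear_combination (-(Dfun z (x₀, y₀, p₀))^2) * h1 + (Dfun z (x₀, y₀, p₀))^2 * h2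
      + Dfun z (x₀, y₀, p₀) * h4 + Dfun z (x₀, y₀, p₀) * (pdx z (x₀, y₀) - p₀) * h3
      + Dfun z (x₀, y₀, p₀) * (pdy (pdy z) (x₀, y₀) + pdy (pdx z) (x₀, y₀) * p₀) * h5
      - Dfun z (x₀, y₀, p₀) * (pdx (pdy z) (x₀, y₀) + pdx (pdx z) (x₀, y₀) * p₀) * h6
      - (pdx z (x₀, y₀) - 2 * p₀) * h6
      - (pdx z (x₀, y₀) - p₀) * (pdx z (x₀, y₀) - 2 * p₀) * h5
  have hψp' : fderiv ℝ ψ (x₀, y₀, p₀) ((0 : ℝ), (0 : ℝ), (1 : ℝ)) ≠ 0 := hψp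
  have hG : (pdy (pdy z) (x₀, y₀) + pdy (pdx z) (x₀, y₀) * p₀)
        + (pdx z (x₀, y₀) - p₀) * (pdx (pdy z) (x₀, y₀) + pdx (pdx z) (x₀, y₀) * p₀)
        + 1 - Dfun z (x₀, y₀, p₀) * pdx (pdx z) (x₀, y₀) = 0 := by
    have hne : Dfun z (x₀, y₀, p₀) * fderiv ℝ ψ (x₀, y₀, p₀) (0, 0, 1) ≠ 0 :=
      mul_ne_zero hD hψp'
    exact (mul_eq_zero.mp key).resolve_left hne
  -- Clairaut for z
  have hclz : pdy (pdx z) (x₀, y₀) = pdx (pdy z) (x₀, y₀) :=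
    pd_swap_aux z (x₀, y₀) hfzd hzsymm (1, 0) (0, 1)
  have hdval : Dfun z (x₀, y₀, p₀)
      = pdy z (x₀, y₀) + pdx z (x₀, y₀) * p₀ - p₀ ^ 2 := rfl
  rw [hclz] at hG
  simp only [GT]
  linear_combination hG + pdx (pdx z) (x₀, y₀) * hdval
end
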